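/- The uniform matroid U_{2,4} cannot be the uniform rate region of any 4-user binary-input MAC: there is no 4-user BMAC P such that, with mutually independent uniform binary inputs X[1], X[2], X[3], X[4] and output Y, one has I(X[i], X[j]; Y) = 0 and I(X[i], X[j]; Y, X[k], X[l]) = 2 for all choices of distinct i, j, k, l in {1, 2, 3, 4}. -/

import Mathlib

set_option linter.unusedSectionVars false


/-!
Polar codes for the m-user MAC (Abbe–Telatar), Statement 8:
The uniform matroid U_{2,4} cannot be the uniform rate region of any 4-user binary-input
MAC: there is no 4-user BMAC P such that `I(X[i],X[j]; Y) = 0` and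
`I(X[i],X[j]; Y, X[k], X[l]) = 2` for all distinct `i,j,k,l`.
-/

/-- Binary (base 2) Shannon entropy of a finitely supported distribution. -/
noncomputable def H2 {Ω : Type*} [Fintype Ω] (p : Ω → ℝ) : ℝ :=
  -∑ ω, p ω * Real.logb 2 (p ω)

open scoped Classical in
/-- Marginal distribution of the push-forward of `p` under `f`. -/
noncomputable def marg {Ω A : Type*} [Fintype Ω] (p : Ω → ℝ) (f : Ω → A) (a : A) : ℝ :=
  ∑ ω, if f ω = a then p ω else 0

/-- Mutual information (in bits) between `f` and `g` under the joint distribution `p`. -/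
noncomputable def mi {Ω A B : Type*} [Fintype Ω] [Fintype A] [Fintype B]
    (p : Ω → ℝ) (f : Ω → A) (g : Ω → B) : ℝ :=
  H2 (marg p f) + H2 (marg p g) - H2 (marg p fun ω => (f ω, g ω))

/-- `W` is a bona fide transition probability kernel (channel), `W x y = P(y | x)`. -/
def IsChannel {α Y : Type*} [Fintype Y] (W : α → Y → ℝ) : Prop :=
  (∀ x y, 0 ≤ W x y) ∧ ∀ x, ∑ y, W x y = 1

/-- Joint distribution of (input, output) of an `m`-user BMAC with i.i.d. uniform binary
inputs. -/
noncomputable def inputJoint {m : ℕ} {Y : Type*} (W : (Fin m → ZMod 2) → Y → ℝ) :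
    (Fin m → ZMod 2) × Y → ℝ :=
  fun q => W q.1 q.2 / 2 ^ m

/-- `I[J](P) = I(X[J]; Y, X[Jᶜ])` for the BMAC `W` with i.i.d. uniform binary inputs. -/
noncomputable def condMI {m : ℕ} {Y : Type*} [Fintype Y] (W : (Fin m → ZMod 2) → Y → ℝ)
    (J : Finset (Fin m)) : ℝ :=
  mi (inputJoint W) (fun q => fun i : {i // i ∈ J} => q.1 i.1)
    (fun q => (q.2, fun i : {i // i ∈ Jᶜ} => q.1 i.1))

/-- `I(X[J]; Y)` for the BMAC `W` with i.i.d. uniform binary inputs. -/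
noncomputable def miY {m : ℕ} {Y : Type*} [Fintype Y] (W : (Fin m → ZMod 2) → Y → ℝ)
    (J : Finset (Fin m)) : ℝ :=
  mi (inputJoint W) (fun q => fun i : {i // i ∈ J} => q.1 i.1) (fun q => q.2)

section Helpers

variable {Ω A B : Type*} [Fintype Ω] [Fintype A] [Fintype B]

lemma marg_nonneg (p : Ω → ℝ) (hp : ∀ ω, 0 ≤ p ω) (f : Ω → A) (a : A) :
    0 ≤ marg p f a := by
  unfold marg
  refine Finset.sum_nonneg fun ω _ => ?_
  split_ifs
  exacts [hp ω, le_rfl]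

lemma marg_sum (p : Ω → ℝ) (f : Ω → A) : ∑ a, marg p f a = ∑ ω, p ω := by
  unfold marg
  rw [Finset.sum_comm]
  refine Finset.sum_congr rfl fun ω _ => ?_
  rw [Finset.sum_eq_single (f ω)]
  · rw [if_pos rfl]
  · intro b _ hb
    exact if_neg fun h => hb h.symm
  · intro hm
    exact absurd (Finset.mem_univ _) hm

lemma single_le_marg (p : Ω → ℝ) (hp : ∀ ω, 0 ≤ p ω) (f : Ω → A) (ω : Ω) :
    p ω ≤ marg p f (f ω) := by
  classical
  unfold marg
  have h := Finset.single_le_sum (f := fun ω' => if f ω' = f ω then p ω' else 0)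
    (fun i _ => by split_ifs; exacts [hp i, le_rfl]) (Finset.mem_univ ω)
  simpa using h

lemma exists_of_marg_pos (p : Ω → ℝ) (f : Ω → A) (a : A) (h : 0 < marg p f a) :
    ∃ ω, f ω = a ∧ 0 < p ω := by
  by_contra hc
  push_neg at hc
  have h2 : marg p f a ≤ 0 := by
    unfold marg
    refine Finset.sum_nonpos fun ω _ => ?_
    split_ifs with hω
    exacts [hc ω hω, le_rfl]
  linarith

lemma marg_comp (p : Ω → ℝ) (f : Ω → A) (h : A → B) (b : B) :
    marg (marg p f) h b = marg p (fun ω => h (f ω)) b := by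
  classical
  unfold marg
  have key : ∀ a, (if h a = b then (∑ ω, if f ω = a then p ω else 0) else 0)
      = ∑ ω, if f ω = a ∧ h a = b then p ω else 0 := by
    intro a
    split_ifs with hc <;> simp [hc]
  rw [Finset.sum_congr rfl fun a _ => key a, Finset.sum_comm]
  refine Finset.sum_congr rfl fun ω _ => ?_
  rw [Finset.sum_eq_single (f ω)]
  · simp
  · intro a _ ha
    rw [if_neg]
    rintro ⟨h1, -⟩
    exact ha h1.symm
  · intro hm
    exact absurd (Finset.mem_univ _) hm

lemma fst_marg_eq (d : A × B → ℝ) (a : A) : marg d Prod.fst a = ∑ b, d (a, b) := by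
  unfold marg
  rw [Fintype.sum_prod_type_right]
  refine Finset.sum_congr rfl fun b _ => ?_
  rw [Finset.sum_eq_single a]
  · rw [if_pos rfl]
  · intro x _ hx
    exact if_neg hx
  · intro hm
    exact absurd (Finset.mem_univ _) hm

lemma snd_marg_eq (d : A × B → ℝ) (b : B) : marg d Prod.snd b = ∑ a, d (a, b) := by
  unfold marg
  rw [Fintype.sum_prod_type]
  refine Finset.sum_congr rfl fun a _ => ?_
  rw [Finset.sum_eq_single b]
  · rw [if_pos rfl]
  · intro x _ hx
    exact if_neg hx
  · intro hm
    exact absurd (Finset.mem_univ _) hm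

end Helpers

section Core

variable {A B : Type*} [Fintype A] [Fintype B]

lemma det_of_H2_eq (d : A × B → ℝ) (hd : ∀ v, 0 ≤ d v)
    (heq : H2 (marg d Prod.snd) = H2 d) :
    ∀ a a' b, 0 < d (a, b) → 0 < d (a', b) → a = a' := by
  classical
  have hsnd : marg d Prod.snd = fun b => ∑ a, d (a, b) := funext (snd_marg_eq d)
  rw [hsnd] at heq
  set DB := fun b => ∑ a, d (a, b) with hDBdef
  have hle : ∀ v : A × B, d v ≤ DB v.2 := by
    intro v
    have : d (v.1, v.2) ≤ DB v.2 :=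
      Finset.single_le_sum (fun a _ => hd (a, v.2)) (Finset.mem_univ v.1)
    simpa using this
  have hterm : ∀ v : A × B, d v * Real.logb 2 (d v) ≤ d v * Real.logb 2 (DB v.2) := by
    intro v
    rcases eq_or_lt_of_le (hd v) with h0 | h0
    · rw [← h0]; simp
    · exact mul_le_mul_of_nonneg_left
        (Real.logb_le_logb_of_le one_lt_two h0 (hle v)) (le_of_lt h0)
  have hH2DB : H2 DB = -∑ v : A × B, d v * Real.logb 2 (DB v.2) := by
    unfold H2
    congr 1
    rw [Fintype.sum_prod_type_right]
    refine Finset.sum_congr rfl fun b _ => ?_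
    rw [Finset.sum_mul]
  have hsums : ∑ v : A × B, d v * Real.logb 2 (d v)
      = ∑ v : A × B, d v * Real.logb 2 (DB v.2) := by
    unfold H2 at heq
    rw [show (-∑ b, DB b * Real.logb 2 (DB b)) = -∑ v : A × B, d v * Real.logb 2 (DB v.2) by
      rw [← hH2DB]; unfold H2; rfl] at heq
    linarith
  have hteq := (Finset.sum_eq_sum_iff_of_le (fun v _ => hterm v)).1 hsums
  intro a a' b hpos hpos'
  have hda : d (a, b) = DB b := by
    have h1 := hteq (a, b) (Finset.mem_univ _)
    have h2 : Real.logb 2 (d (a, b)) = Real.logb 2 (DB b) :=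
      mul_left_cancel₀ (ne_of_gt hpos) (by simpa using h1)
    have h3 : (0:ℝ) < DB b := lt_of_lt_of_le hpos (hle (a, b))
    exact Real.logb_injOn_pos one_lt_two (Set.mem_Ioi.2 hpos) (Set.mem_Ioi.2 h3) h2
  have hda' : d (a', b) = DB b := by
    have h1 := hteq (a', b) (Finset.mem_univ _)
    have h2 : Real.logb 2 (d (a', b)) = Real.logb 2 (DB b) :=
      mul_left_cancel₀ (ne_of_gt hpos') (by simpa using h1)
    have h3 : (0:ℝ) < DB b := lt_of_lt_of_le hpos' (hle (a', b))
    exact Real.logb_injOn_pos one_lt_two (Set.mem_Ioi.2 hpos') (Set.mem_Ioi.2 h3) h2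
  by_contra hne
  have hsub : ({a, a'} : Finset A) ⊆ Finset.univ := Finset.subset_univ _
  have hpair : d (a, b) + d (a', b) ≤ DB b := by
    have := Finset.sum_le_sum_of_subset_of_nonneg hsub
      (fun i _ _ => hd (i, b)) (f := fun a => d (a, b))
    rwa [Finset.sum_pair hne] at this
  rw [hda, hda'] at hpair
  have : (0:ℝ) < DB b := lt_of_lt_of_le hpos (hle (a, b))
  rw [← hda'] at this
  linarith [hda' ▸ this]

end Core

section Gibbs

variable {A B : Type*} [Fintype A] [Fintype B]

lemma indep_of_mi_eq_zero (d : A × B → ℝ) (hd : ∀ v, 0 ≤ d v) (hs : ∑ v, d v = 1)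
    (hmi : H2 (marg d Prod.fst) + H2 (marg d Prod.snd) - H2 d = 0) :
    ∀ v, d v = marg d Prod.fst v.1 * marg d Prod.snd v.2 := by
  classical
  have hfst : marg d Prod.fst = fun a => ∑ b, d (a, b) := funext (fst_marg_eq d)
  have hsnd : marg d Prod.snd = fun b => ∑ a, d (a, b) := funext (snd_marg_eq d)
  rw [hfst, hsnd] at hmi ⊢
  set DA := fun a => ∑ b, d (a, b) with hDAdef
  set DB := fun b => ∑ a, d (a, b) with hDBdef
  have hDAnn : ∀ a, 0 ≤ DA a := fun a => Finset.sum_nonneg fun b _ => hd (a, b)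
  have hDBnn : ∀ b, 0 ≤ DB b := fun b => Finset.sum_nonneg fun a _ => hd (a, b)
  have hleA : ∀ v : A × B, d v ≤ DA v.1 := by
    intro v
    have : d (v.1, v.2) ≤ DA v.1 :=
      Finset.single_le_sum (fun b _ => hd (v.1, b)) (Finset.mem_univ v.2)
    simpa using this
  have hleB : ∀ v : A × B, d v ≤ DB v.2 := by
    intro v
    have : d (v.1, v.2) ≤ DB v.2 :=
      Finset.single_le_sum (fun a _ => hd (a, v.2)) (Finset.mem_univ v.1)
    simpa using this
  have hDA1 : ∑ a, DA a = 1 := by rw [← Fintype.sum_prod_type]; exact hs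
  have hDB1 : ∑ b, DB b = 1 := by rw [← Fintype.sum_prod_type_right]; exact hs
  have hprod1 : ∑ v : A × B, DA v.1 * DB v.2 = 1 := by
    rw [Fintype.sum_prod_type]
    calc ∑ a, ∑ b, DA a * DB b = ∑ a, DA a * ∑ b, DB b := by
          refine Finset.sum_congr rfl fun a _ => ?_
          rw [Finset.mul_sum]
      _ = 1 := by rw [hDB1]; simpa using hDA1
  set F : A × B → ℝ := fun v => d v * Real.logb 2 (d v)
    - d v * Real.logb 2 (DA v.1 * DB v.2) with hFdef
  set G : A × B → ℝ := fun v => (d v - DA v.1 * DB v.2) / Real.log 2 with hGdef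
  have hlog2 : (0:ℝ) < Real.log 2 := Real.log_pos one_lt_two
  have hFform : ∀ v : A × B, 0 < d v →
      F v = (d v * Real.log (d v) - d v * Real.log (DA v.1 * DB v.2)) / Real.log 2 := by
    intro v _
    simp only [hFdef, Real.logb]
    ring
  have hsplit : ∀ v : A × B, F v = d v * Real.logb 2 (d v)
      - d v * Real.logb 2 (DA v.1) - d v * Real.logb 2 (DB v.2) := by
    intro v
    rcases eq_or_lt_of_le (hd v) with h0 | h0
    · simp [hFdef, ← h0]
    · have hA : 0 < DA v.1 := lt_of_lt_of_le h0 (hleA v)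
      have hB : 0 < DB v.2 := lt_of_lt_of_le h0 (hleB v)
      simp only [hFdef, Real.logb_mul (ne_of_gt hA) (ne_of_gt hB)]
      ring
  have hFsum : ∑ v, F v = 0 := by
    have e1 : ∑ v : A × B, d v * Real.logb 2 (DA v.1) = ∑ a, DA a * Real.logb 2 (DA a) := by
      rw [Fintype.sum_prod_type]
      refine Finset.sum_congr rfl fun a _ => ?_
      rw [Finset.sum_mul]
    have e2 : ∑ v : A × B, d v * Real.logb 2 (DB v.2) = ∑ b, DB b * Real.logb 2 (DB b) := by
      rw [Fintype.sum_prod_type_right]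
      refine Finset.sum_congr rfl fun b _ => ?_
      rw [Finset.sum_mul]
    have e3 : ∑ v, F v = (∑ v : A × B, d v * Real.logb 2 (d v))
        - (∑ a, DA a * Real.logb 2 (DA a)) - (∑ b, DB b * Real.logb 2 (DB b)) := by
      rw [← e1, ← e2, ← Finset.sum_sub_distrib, ← Finset.sum_sub_distrib]
      exact Finset.sum_congr rfl fun v _ => hsplit v
    rw [e3]
    unfold H2 at hmi
    linarith
  have hGsum : ∑ v, G v = 0 := by
    simp only [hGdef]
    rw [← Finset.sum_div, Finset.sum_sub_distrib, hs, hprod1]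
    simp
  have hGF : ∀ v : A × B, G v ≤ F v := by
    intro v
    rcases eq_or_lt_of_le (hd v) with h0 | h0
    · have hF0 : F v = 0 := by simp [hFdef, ← h0]
      rw [hF0, hGdef]
      have hnum : d v - DA v.1 * DB v.2 ≤ 0 := by
        rw [← h0]
        simp [mul_nonneg (hDAnn v.1) (hDBnn v.2)]
      exact div_nonpos_of_nonpos_of_nonneg hnum (le_of_lt hlog2)
    · have hA : 0 < DA v.1 := lt_of_lt_of_le h0 (hleA v)
      have hB : 0 < DB v.2 := lt_of_lt_of_le h0 (hleB v)
      have hr : 0 < DA v.1 * DB v.2 := mul_pos hA hB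
      have hlog : Real.log (DA v.1 * DB v.2 / d v) ≤ DA v.1 * DB v.2 / d v - 1 :=
        Real.log_le_sub_one_of_pos (div_pos hr h0)
      rw [Real.log_div (ne_of_gt hr) (ne_of_gt h0)] at hlog
      have hmul := mul_le_mul_of_nonneg_left hlog (le_of_lt h0)
      have hrd : d v * (DA v.1 * DB v.2 / d v - 1) = DA v.1 * DB v.2 - d v := by
        field_simp
      rw [hrd, mul_sub] at hmul
      rw [hFform v h0]
      simp only [hGdef]
      rw [div_le_div_iff_of_pos_right hlog2]
      linarith
  have hFG : ∀ v : A × B, F v = G v := by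
    have h1 : ∑ v, (F v - G v) = 0 := by
      rw [Finset.sum_sub_distrib, hFsum, hGsum, sub_zero]
    have h2 := (Finset.sum_eq_zero_iff_of_nonneg
      (fun v _ => sub_nonneg.2 (hGF v))).1 h1
    intro v
    have := h2 v (Finset.mem_univ v)
    linarith
  intro v
  rcases eq_or_lt_of_le (hd v) with h0 | h0
  · have hF0 : F v = 0 := by simp [hFdef, ← h0]
    have hG0 : G v = 0 := by rw [← hFG v, hF0]
    simp only [hGdef, div_eq_zero_iff] at hG0
    rcases hG0 with hG0 | hG0
    · rw [← h0]; linarith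
    · exact absurd hG0 (ne_of_gt hlog2)
  · have hA : 0 < DA v.1 := lt_of_lt_of_le h0 (hleA v)
    have hB : 0 < DB v.2 := lt_of_lt_of_le h0 (hleB v)
    have hr : 0 < DA v.1 * DB v.2 := mul_pos hA hB
    by_contra hne
    have hne1 : DA v.1 * DB v.2 / d v ≠ 1 := by
      intro h1
      exact hne ((div_eq_one_iff_eq (ne_of_gt h0)).1 h1).symm
    have hlog : Real.log (DA v.1 * DB v.2 / d v) < DA v.1 * DB v.2 / d v - 1 :=
      Real.log_lt_sub_one_of_pos (div_pos hr h0) hne1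
    rw [Real.log_div (ne_of_gt hr) (ne_of_gt h0)] at hlog
    have hmul := mul_lt_mul_of_pos_left hlog h0
    have hrd : d v * (DA v.1 * DB v.2 / d v - 1) = DA v.1 * DB v.2 - d v := by
      field_simp
    rw [hrd, mul_sub] at hmul
    have heqv := hFG v
    rw [hFform v h0] at heqv
    simp only [hGdef] at heqv
    have heq2 : d v * Real.log (d v) - d v * Real.log (DA v.1 * DB v.2)
        = d v - DA v.1 * DB v.2 := by
      field_simp at heqv
      linarith
    linarith

end Gibbs

section Glue

variable {Ω A B : Type*} [Fintype Ω] [Fintype A] [Fintype B]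

lemma indep_claim (p : Ω → ℝ) (hp : ∀ ω, 0 ≤ p ω) (hs : ∑ ω, p ω = 1)
    (f : Ω → A) (g : Ω → B) (hmi : mi p f g = 0) :
    ∀ a b, marg p (fun ω => (f ω, g ω)) (a, b) = marg p f a * marg p g b := by
  classical
  have hd : ∀ v, 0 ≤ marg p (fun ω => (f ω, g ω)) v := marg_nonneg p hp _
  have hds : ∑ v, marg p (fun ω => (f ω, g ω)) v = 1 := (marg_sum p _).trans hs
  have hfst : marg (marg p (fun ω => (f ω, g ω))) Prod.fst = marg p f :=
    funext fun a => marg_comp p (fun ω => (f ω, g ω)) Prod.fst a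
  have hsnd : marg (marg p (fun ω => (f ω, g ω))) Prod.snd = marg p g :=
    funext fun b => marg_comp p (fun ω => (f ω, g ω)) Prod.snd b
  have key := indep_of_mi_eq_zero (marg p (fun ω => (f ω, g ω))) hd hds
    (by rw [hfst, hsnd]; unfold mi at hmi; linarith)
  intro a b
  have := key (a, b)
  rwa [hfst, hsnd] at this

lemma det_claim (p : Ω → ℝ) (hp : ∀ ω, 0 ≤ p ω) (f : Ω → A) (g : Ω → B)
    (hHf : H2 (marg p f) = 2) (hmi : mi p f g = 2) :
    ∀ ω ω', 0 < p ω → 0 < p ω' → g ω = g ω' → f ω = f ω' := by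
  classical
  have hd : ∀ v, 0 ≤ marg p (fun ω => (f ω, g ω)) v := marg_nonneg p hp _
  have hsnd : marg (marg p (fun ω => (f ω, g ω))) Prod.snd = marg p g :=
    funext fun b => marg_comp p (fun ω => (f ω, g ω)) Prod.snd b
  have hkey : H2 (marg (marg p (fun ω => (f ω, g ω))) Prod.snd)
      = H2 (marg p (fun ω => (f ω, g ω))) := by
    rw [hsnd]
    unfold mi at hmi
    rw [hHf] at hmi
    linarith
  intro ω ω' hω hω' hg
  have h1 : 0 < marg p (fun ω => (f ω, g ω)) (f ω, g ω) :=
    lt_of_lt_of_le hω (single_le_marg p hp _ ω)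
  have h2 : 0 < marg p (fun ω => (f ω, g ω)) (f ω', g ω') :=
    lt_of_lt_of_le hω' (single_le_marg p hp _ ω')
  rw [hg] at h1
  exact det_of_H2_eq (marg p (fun ω => (f ω, g ω))) hd hkey (f ω) (f ω') (g ω') h1 h2

end Glue

section Chan

variable {Y : Type} [Fintype Y]

lemma inputJoint_nonneg (W : (Fin 4 → ZMod 2) → Y → ℝ) (hW : IsChannel W) :
    ∀ v, 0 ≤ inputJoint W v :=
  fun v => div_nonneg (hW.1 v.1 v.2) (by positivity)

lemma inputJoint_sum (W : (Fin 4 → ZMod 2) → Y → ℝ) (hW : IsChannel W) :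
    ∑ v, inputJoint W v = 1 := by
  unfold inputJoint
  rw [Fintype.sum_prod_type]
  have e : ∀ x : Fin 4 → ZMod 2, ∑ y, W x y / 2 ^ 4 = 1 / 2 ^ 4 := by
    intro x
    rw [← Finset.sum_div, hW.2 x]
  rw [Finset.sum_congr rfl fun x _ => e x, Finset.sum_const]
  have : Fintype.card (Fin 4 → ZMod 2) = 16 := by
    rw [Fintype.card_fun]
    rfl
  rw [Finset.card_univ, this]
  norm_num

lemma marg_restrict (W : (Fin 4 → ZMod 2) → Y → ℝ) (hW : IsChannel W) (J : Finset (Fin 4))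
    (hcard : ∀ a : {z // z ∈ J} → ZMod 2,
      (Finset.univ.filter fun x : Fin 4 → ZMod 2 =>
        (fun z : {z // z ∈ J} => x z.1) = a).card = 4)
    (a : {z // z ∈ J} → ZMod 2) :
    marg (inputJoint W) (fun v => fun z : {z // z ∈ J} => v.1 z.1) a = 1 / 4 := by
  have key : (∑ y : Y, ∑ x : Fin 4 → ZMod 2,
      if (fun z : {z // z ∈ J} => x z.1) = a then W x y / 2 ^ 4 else 0) = 1 / 4 := by
    simp only [← Finset.sum_filter]
    rw [Finset.sum_comm]
    simp only [← Finset.sum_div, hW.2]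
    rw [Finset.sum_const, hcard a]
    norm_num
  unfold marg inputJoint
  rw [Fintype.sum_prod_type_right]
  dsimp only
  convert key using 5

lemma H2_of_uniform {A : Type*} [Fintype A] (hA : Fintype.card A = 4) (p : A → ℝ)
    (hp : ∀ a, p a = 1 / 4) : H2 p = 2 := by
  unfold H2
  have hlogb : Real.logb 2 (1/4 : ℝ) = -2 := by
    rw [show (1/4:ℝ) = (2:ℝ) ^ (-2:ℝ) by rw [Real.rpow_neg (by norm_num)]; norm_num]
    exact Real.logb_rpow (by norm_num) (by norm_num)
  have e : ∀ a : A, p a * Real.logb 2 (p a) = -(1/2 : ℝ) := by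
    intro a
    rw [hp a, hlogb]
    norm_num
  rw [Finset.sum_congr rfl fun a _ => e a, Finset.sum_const, Finset.card_univ, hA]
  norm_num

end Chan

theorem statement8 (Y : Type) [Fintype Y] (W : (Fin 4 → ZMod 2) → Y → ℝ)
    (hW : IsChannel W) :
    ¬ (∀ i j k l : Fin 4, i ≠ j → i ≠ k → i ≠ l → j ≠ k → j ≠ l → k ≠ l →
        miY W {i, j} = 0 ∧ condMI W {i, j} = 2) := by
  intro h
  have hp0 : ∀ v, 0 ≤ inputJoint W v := inputJoint_nonneg W hW
  have hp1 : ∑ v, inputJoint W v = 1 := inputJoint_sum W hW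
  have hfilt : ∀ (J : Finset (Fin 4)), J.card = 2 → ∀ a : {z // z ∈ J} → ZMod 2,
      (Finset.univ.filter fun x : Fin 4 → ZMod 2 =>
        (fun z : {z // z ∈ J} => x z.1) = a).card = 4 := by decide
  have hcard4 : ∀ J : Finset (Fin 4), J.card = 2 →
      Fintype.card ({z // z ∈ J} → ZMod 2) = 4 := by
    intro J hJ
    rw [Fintype.card_fun, Fintype.card_coe, hJ]
    rfl
  have hmargJ : ∀ (J : Finset (Fin 4)), J.card = 2 → ∀ a,
      marg (inputJoint W) (fun v => fun z : {z // z ∈ J} => v.1 z.1) a = 1 / 4 :=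
    fun J hJ => marg_restrict W hW J (hfilt J hJ)
  have hHJ : ∀ (J : Finset (Fin 4)), J.card = 2 →
      H2 (marg (inputJoint W) (fun v => fun z : {z // z ∈ J} => v.1 z.1)) = 2 :=
    fun J hJ => H2_of_uniform (hcard4 J hJ) _ (hmargJ J hJ)
  obtain ⟨y0, hy0⟩ : ∃ y0, 0 < marg (inputJoint W) (fun v => v.2) y0 := by
    by_contra hc
    push_neg at hc
    have hz : ∀ y, marg (inputJoint W) (fun v => v.2) y = 0 :=
      fun y => le_antisymm (hc y) (marg_nonneg _ hp0 _ y)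
    have h10 : (1:ℝ) = 0 := by
      rw [← hp1, ← marg_sum (inputJoint W) (fun v : _ × Y => v.2)]
      exact Finset.sum_eq_zero fun y _ => hz y
    norm_num at h10
  have hsurj : ∀ (J : Finset (Fin 4)), J.card = 2 → miY W J = 0 →
      ∀ a : {z // z ∈ J} → ZMod 2, ∃ x : Fin 4 → ZMod 2,
        0 < inputJoint W (x, y0) ∧ ∀ z : {z // z ∈ J}, x z.1 = a z := by
    intro J hJ hmi0 a
    have hind := indep_claim (inputJoint W) hp0 hp1
      (fun v => fun z : {z // z ∈ J} => v.1 z.1) (fun v => v.2) hmi0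
    have hpos : 0 < marg (inputJoint W)
        (fun v => ((fun z : {z // z ∈ J} => v.1 z.1), v.2)) (a, y0) := by
      rw [hind a y0, hmargJ J hJ a]
      exact mul_pos (by norm_num) hy0
    obtain ⟨ω, hω, hωpos⟩ := exists_of_marg_pos _ _ _ hpos
    have h1 : ω.2 = y0 := congrArg Prod.snd hω
    have h2 : (fun z : {z // z ∈ J} => ω.1 z.1) = a := congrArg Prod.fst hω
    refine ⟨ω.1, ?_, fun z => congrFun h2 z⟩
    have he : (ω.1, y0) = ω := by rw [← h1]
    rw [he]
    exact hωpos
  have hdet : ∀ (J : Finset (Fin 4)), J.card = 2 → condMI W J = 2 →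
      ∀ (x x' : Fin 4 → ZMod 2) (y : Y), 0 < inputJoint W (x, y) →
        0 < inputJoint W (x', y) → (∀ z : Fin 4, z ∈ Jᶜ → x z = x' z) →
        ∀ z : {z // z ∈ J}, x z.1 = x' z.1 := by
    intro J hJ hc x x' y hx hx' hcompl
    have hD := det_claim (inputJoint W) hp0
      (fun v => fun z : {z // z ∈ J} => v.1 z.1)
      (fun v => (v.2, fun z : {z // z ∈ Jᶜ} => v.1 z.1))
      (hHJ J hJ) hc (x, y) (x', y) hx hx'
      (by
        dsimp only
        exact Prod.ext rfl (funext fun w => hcompl w.1 w.2))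
    exact fun z => congrFun hD z
  have hinj : ∀ (J : Finset (Fin 4)) (i j : Fin 4), J.card = 2 →
      (∀ z : Fin 4, z ∉ J ↔ (z = i ∨ z = j)) → condMI W J = 2 →
      ∀ x x' : Fin 4 → ZMod 2, 0 < inputJoint W (x, y0) → 0 < inputJoint W (x', y0) →
        x i = x' i → x j = x' j → x = x' := by
    intro J i j hJ hJc hc x x' hx hx' hi hj
    have hcompl : ∀ z : Fin 4, z ∈ Jᶜ → x z = x' z := by
      intro z hz
      rcases (hJc z).1 (Finset.mem_compl.1 hz) with rfl | rfl
      exacts [hi, hj]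
    have hin := hdet J hJ hc x x' y0 hx hx' hcompl
    funext z
    by_cases hzJ : z ∈ J
    · exact hin ⟨z, hzJ⟩
    · rcases (hJc z).1 hzJ with rfl | rfl
      exacts [hi, hj]
  have H01 := h 0 1 2 3 (by decide) (by decide) (by decide) (by decide) (by decide) (by decide)
  have H23 := h 2 3 0 1 (by decide) (by decide) (by decide) (by decide) (by decide) (by decide)
  have H13 := h 1 3 0 2 (by decide) (by decide) (by decide) (by decide) (by decide) (by decide)
  have H02 := h 0 2 1 3 (by decide) (by decide) (by decide) (by decide) (by decide) (by decide)
  have H12 := h 1 2 0 3 (by decide) (by decide) (by decide) (by decide) (by decide) (by decide)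
  have H03 := h 0 3 1 2 (by decide) (by decide) (by decide) (by decide) (by decide) (by decide)
  have inj01 := hinj {2,3} 0 1 (by decide) (by decide) H23.2
  have inj02 := hinj {1,3} 0 2 (by decide) (by decide) H13.2
  have inj12 := hinj {0,3} 1 2 (by decide) (by decide) H03.2
  have inj03 := hinj {1,2} 0 3 (by decide) (by decide) H12.2
  have inj13 := hinj {0,2} 1 3 (by decide) (by decide) H02.2
  have hc4 : ∀ a b : ZMod 2, ∃ x : Fin 4 → ZMod 2,
      0 < inputJoint W (x, y0) ∧ x 0 = a ∧ x 1 = b := by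
    intro a b
    obtain ⟨x, hx, hz⟩ := hsurj {0,1} (by decide) H01.1
      (fun z => if z.1 = 0 then a else b)
    refine ⟨x, hx, ?_, ?_⟩
    · have h0 := hz ⟨0, by decide⟩
      dsimp only at h0
      rwa [if_pos rfl] at h0
    · have h1 := hz ⟨1, by decide⟩
      dsimp only at h1
      rwa [if_neg (by decide)] at h1
  obtain ⟨c00, p00, h000, h001⟩ := hc4 0 0
  obtain ⟨c01, p01, h010, h011⟩ := hc4 0 1
  obtain ⟨c10, p10, h100, h101⟩ := hc4 1 0
  obtain ⟨c11, p11, h110, h111⟩ := hc4 1 1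
  have zflip : ∀ a b : ZMod 2, a ≠ b → b = a + 1 := by decide
  have zcases : ∀ a : ZMod 2, a = 0 ∨ a = 1 := by decide
  have zne : (0:ZMod 2) ≠ 1 := by decide
  have d2_01 : c01 2 = c00 2 + 1 := by
    refine zflip _ _ fun he => ?_
    have hx := inj02 c00 c01 p00 p01 (by rw [h000, h010]) he
    exact zne (by rw [← h001, hx, h011])
  have d2_10 : c10 2 = c00 2 + 1 := by
    refine zflip _ _ fun he => ?_
    have hx := inj12 c00 c10 p00 p10 (by rw [h001, h101]) he
    exact zne (by rw [← h000, hx, h100])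
  have d2_11 : c11 2 = c01 2 + 1 := by
    refine zflip _ _ fun he => ?_
    have hx := inj12 c01 c11 p01 p11 (by rw [h011, h111]) he
    exact zne (by rw [← h010, hx, h110])
  have d3_01 : c01 3 = c00 3 + 1 := by
    refine zflip _ _ fun he => ?_
    have hx := inj03 c00 c01 p00 p01 (by rw [h000, h010]) he
    exact zne (by rw [← h001, hx, h011])
  have d3_10 : c10 3 = c00 3 + 1 := by
    refine zflip _ _ fun he => ?_
    have hx := inj13 c00 c10 p00 p10 (by rw [h001, h101]) he
    exact zne (by rw [← h000, hx, h100])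
  have d3_11 : c11 3 = c01 3 + 1 := by
    refine zflip _ _ fun he => ?_
    have hx := inj13 c01 c11 p01 p11 (by rw [h011, h111]) he
    exact zne (by rw [← h010, hx, h110])
  have hone : (1:ZMod 2) + 1 = 0 := by decide
  have s01 : c01 2 + c01 3 = c00 2 + c00 3 := by
    rw [d2_01, d3_01]
    calc c00 2 + 1 + (c00 3 + 1) = c00 2 + c00 3 + (1 + 1) := by ring
      _ = c00 2 + c00 3 := by rw [hone, add_zero]
  have s10 : c10 2 + c10 3 = c00 2 + c00 3 := by
    rw [d2_10, d3_10]
    calc c00 2 + 1 + (c00 3 + 1) = c00 2 + c00 3 + (1 + 1) := by ring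
      _ = c00 2 + c00 3 := by rw [hone, add_zero]
  have s11 : c11 2 + c11 3 = c00 2 + c00 3 := by
    rw [d2_11, d3_11, d2_01, d3_01]
    calc c00 2 + 1 + 1 + (c00 3 + 1 + 1)
        = c00 2 + c00 3 + ((1 + 1) + (1 + 1)) := by ring
      _ = c00 2 + c00 3 := by rw [hone, add_zero, add_zero]
  obtain ⟨w, pw, hw2, hw3⟩ : ∃ w : Fin 4 → ZMod 2, 0 < inputJoint W (w, y0)
      ∧ w 2 = c00 2 ∧ w 3 = c00 3 + 1 := by
    obtain ⟨w, hw, hz⟩ := hsurj {2,3} (by decide) H23.1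
      (fun z => if z.1 = 2 then c00 2 else c00 3 + 1)
    refine ⟨w, hw, ?_, ?_⟩
    · have h2 := hz ⟨2, by decide⟩
      dsimp only at h2
      rwa [if_pos rfl] at h2
    · have h3 := hz ⟨3, by decide⟩
      dsimp only at h3
      rwa [if_neg (by decide)] at h3
  have hwsum : w 2 + w 3 = c00 2 + c00 3 := by
    rcases zcases (w 0) with hw0 | hw0 <;> rcases zcases (w 1) with hw1 | hw1
    · rw [inj01 w c00 pw p00 (by rw [hw0, h000]) (by rw [hw1, h001])]
    · rw [inj01 w c01 pw p01 (by rw [hw0, h010]) (by rw [hw1, h011])]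
      exact s01
    · rw [inj01 w c10 pw p10 (by rw [hw0, h100]) (by rw [hw1, h101])]
      exact s10
    · rw [inj01 w c11 pw p11 (by rw [hw0, h110]) (by rw [hw1, h111])]
      exact s11
  rw [hw2, hw3] at hwsum
  have h1 : c00 3 + 1 = c00 3 := add_left_cancel hwsum
  have h2 : (1:ZMod 2) = 0 := by
    nth_rewrite 2 [← add_zero (c00 3)] at h1
    exact add_left_cancel h1
  exact (by decide : (1:ZMod 2) ≠ 0) h2
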